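/- Let m ≥ 0 be an integer, ℓ ≥ 0, and let λ ∈ I_0^ℓ(c_{−m}). Then λ has either m or m+1 parts; set r_j = λ_j − (c_{−m})_j for 1 ≤ j ≤ m (each r_j ∈ {0,1,2}) and r_{m+1} = λ_{m+1} ∈ {0,1} (taking λ_{m+1} = 0 if λ has only m parts). Let ε_m = 1 if m is odd and 0 if m is even, and let a(λ) be the number of even entries (with 0 counted as even) of the sequence obtained from λ by appending one entry 0 when the number of parts of λ is odd. Then 2^{r_{m+1} ε_m} · r_1! ⋯ r_m! = 2^{(ℓ − a(λ) + ε_m)/2}. -/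

import Mathlib

noncomputable section

namespace Rect

/-- `l` is a partition: weakly decreasing list of positive integers -/
def IsPartition (l : List ℕ) : Prop := l.Pairwise (· ≥ ·) ∧ ∀ x ∈ l, 0 < x

/-- `l` is a strict partition: strictly decreasing list of positive integers -/
def IsStrictPartition (l : List ℕ) : Prop := l.Pairwise (· > ·) ∧ ∀ x ∈ l, 0 < x

/-- the color of a node in column `j` (columns are 1-indexed) -/
def nodeColor (j : ℕ) : ℕ := if j % 4 = 0 ∨ j % 4 = 1 then 0 else 1

/-- `I_i^ℓ(λ)`: strict partitions `μ ⊇ λ` with `|μ| = |λ| + ℓ` all of whose nodes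
outside `λ` have color `i` -/
def ISet (i ℓ : ℕ) (lam : List ℕ) : Set (List ℕ) :=
  {mu | IsStrictPartition mu ∧ (∀ j, lam.getD j 0 ≤ mu.getD j 0) ∧
    mu.sum = lam.sum + ℓ ∧
    ∀ j c, lam.getD j 0 < c → c ≤ mu.getD j 0 → nodeColor c = i}

/-- the 4-bar core `c_m` -/
def cBar (m : ℤ) : List ℕ :=
  if 0 ≤ m then (List.range m.toNat).map fun i => 4 * (m.toNat - 1 - i) + 1
  else (List.range (-m).toNat).map fun i => 4 * ((-m).toNat - 1 - i) + 3

/-- `λ[0]`: the even parts of `λ`, halved -/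
def bar0 (lam : List ℕ) : List ℕ := (lam.filter fun x => x % 2 == 0).map (· / 2)

/-- the charge of the Maya diagram of `λ` -/
def charge (lam : List ℕ) : ℤ :=
  ((lam.filter fun x => x % 4 == 1).length : ℤ) -
    ((lam.filter fun x => x % 4 == 3).length : ℤ)

/-- membership in the Maya diagram
`M(λ) = {k ≥ 0 : 4k+1 ∈ λ} ∪ {k < 0 : -4k-1 ∉ λ}` -/
def mayaMem (lam : List ℕ) (k : ℤ) : Bool :=
  if 0 ≤ k then decide ((4 * k.toNat + 1) ∈ lam) else !(decide ((4 * (-k).toNat - 1) ∈ lam))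

/-- the elements of the Maya diagram of `λ` in `[-B, B]`, `B = |λ|+1`, in
decreasing order; all elements `< -B` belong to `M(λ)` and all elements `> B`
do not, so this records all the information of `M(λ)`. -/
def mayaList (lam : List ℕ) : List ℤ :=
  ((List.range (2 * (lam.sum + 1) + 1)).map fun j => (lam.sum + 1 : ℤ) - j).filter (mayaMem lam)

/-- `λ[1]`: writing the Maya diagram as a decreasing sequence `i_1 > i_2 > ⋯`,
this is the partition `(i_1 + 1 - c, i_2 + 2 - c, …)` where `c` is the charge -/
def bar1 (lam : List ℕ) : List ℕ :=
  (((mayaList lam).zipIdx).map fun p => (p.1 + (p.2 : ℤ) + 1 - charge lam).toNat).filter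
    fun x => decide (0 < x)

/-- the number `g(λ)` of pairs of beads `(a, b)` on the 4-bar abacus with
`a ≡ 1 (mod 4)`, `b` even and `a > b`; a bead is put at `0` iff `M < 0` and `λ`
has exactly `-M` parts -/
def gnum (M : ℤ) (lam : List ℕ) : ℕ :=
  let beads := if M < 0 ∧ lam.length = (-M).toNat then 0 :: lam else lam
  ((beads.filter fun a => a % 4 == 1).map fun a =>
    beads.countP fun b => decide (b % 2 = 0 ∧ b < a)).sum

/-- the sign `δ(λ) = (-1)^{g(λ)}` for `λ ∈ I_i^ℓ(c_M)` -/
def deltaSign (M : ℤ) (lam : List ℕ) : ℤ := (-1) ^ gnum M lam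

/-- `ε_m`: 1 if `m` is odd, 0 if `m` is even -/
def epsN (m : ℕ) : ℕ := if m % 2 = 1 then 1 else 0



/-- auxiliary: sum of a mapped range as a Finset sum -/
lemma sum_map_range_aux (n : ℕ) (f : ℕ → ℕ) :
    ((List.range n).map f).sum = ∑ i ∈ Finset.range n, f i := by
  induction n with
  | zero => simp
  | succ n ih =>
    rw [List.range_succ, List.map_append, List.sum_append, Finset.sum_range_succ, ih]; simp

/-- auxiliary: countP as a Finset sum over indices -/
lemma countP_eq_sum_range_aux (l : List ℕ) (p : ℕ → Bool) :
    l.countP p = ∑ j ∈ Finset.range l.length, if p (l.getD j 0) then 1 else 0 := by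
  induction l with
  | nil => simp
  | cons a t ih =>
    rw [List.countP_cons, List.length_cons, Finset.sum_range_succ']
    simp [ih]

/-- auxiliary: list sum as a Finset sum over indices -/
lemma sum_eq_sum_range_aux (l : List ℕ) :
    l.sum = ∑ j ∈ Finset.range l.length, l.getD j 0 := by
  conv_lhs => rw [← List.ofFn_get l]
  rw [List.sum_ofFn]
  rw [show (∑ i : Fin l.length, l.get i) = ∑ i : Fin l.length, l.getD (i : ℕ) 0 from
    Finset.sum_congr rfl (fun i _ => by rw [List.getD_eq_getElem _ _ i.isLt]; simp)]
  exact Fin.sum_univ_eq_sum_range (fun j => l.getD j 0) l.length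

/-- auxiliary: the entries of `cBar (-m)` -/
lemma cBar_neg_getD_aux (m j : ℕ) :
    (cBar (-(m : ℤ))).getD j 0 = if j < m then 4 * (m - 1 - j) + 3 else 0 := by
  have hb : cBar (-(m : ℤ)) = (List.range m).map fun i => 4 * (m - 1 - i) + 3 := by
    rcases Nat.eq_zero_or_pos m with h0 | h0
    · subst h0; simp [cBar]
    · rw [cBar, if_neg (by omega)]
      simp
  rw [hb]
  rcases lt_or_ge j m with hj | hj
  · rw [if_pos hj, List.getD_eq_getElem _ _ (by simpa using hj)]
    simp
  · rw [if_neg (by omega), List.getD_eq_default]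
    simpa using hj

/-- auxiliary: the sum of `cBar (-m)` -/
lemma cBar_neg_sum_aux (m : ℕ) :
    (cBar (-(m : ℤ))).sum = ∑ i ∈ Finset.range m, (4 * (m - 1 - i) + 3) := by
  have hb : cBar (-(m : ℤ)) = (List.range m).map fun i => 4 * (m - 1 - i) + 3 := by
    rcases Nat.eq_zero_or_pos m with h0 | h0
    · subst h0; simp [cBar]
    · rw [cBar, if_neg (by omega)]
      simp
  rw [hb, sum_map_range_aux]

/-- For `m ≥ 0` and `λ ∈ I_0^ℓ(c_{-m})`: `λ` has `m` or `m+1` parts, each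
difference `r_j = λ_j - (c_{-m})_j` (`j ≤ m`) lies in `{0,1,2}`,
`r_{m+1} = λ_{m+1} ∈ {0,1}`, and with `a(λ)` the number of even entries of `λ`
(a `0` appended when the number of parts is odd, `0` counting as even) one has
`2^{r_{m+1} ε_m} · r_1! ⋯ r_m! = 2^{(ℓ - a(λ) + ε_m)/2}` (in particular
`ℓ - a(λ) + ε_m` is a nonnegative even integer `2e`). -/

theorem factorial_product_zero (m ℓ : ℕ) (lam : List ℕ)
    (h : lam ∈ ISet 0 ℓ (cBar (-(m : ℤ)))) :
    (lam.length = m ∨ lam.length = m + 1) ∧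
    (∀ j < m, lam.getD j 0 - (cBar (-(m : ℤ))).getD j 0 ∈ ({0, 1, 2} : Set ℕ)) ∧
    lam.getD m 0 ∈ ({0, 1} : Set ℕ) ∧
    ∃ e : ℕ,
      2 * e + ((lam.countP fun x => x % 2 == 0) + (if lam.length % 2 = 1 then 1 else 0))
          = ℓ + epsN m ∧
      2 ^ (lam.getD m 0 * epsN m) *
          (∏ j ∈ Finset.range m,
            Nat.factorial (lam.getD j 0 - (cBar (-(m : ℤ))).getD j 0)) = 2 ^ e := by
  obtain ⟨⟨hsort, hpos⟩, hdom, hsum, hcol⟩ := h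
  have hcget : ∀ j, (cBar (-(m : ℤ))).getD j 0 = if j < m then 4 * (m - 1 - j) + 3 else 0 :=
    cBar_neg_getD_aux m
  have hub : ∀ j < m, lam.getD j 0 ≤ 4 * (m - 1 - j) + 5 := by
    intro j hj
    by_contra hcon
    push_neg at hcon
    have h3 := hcol j (4 * (m - 1 - j) + 6) (by rw [hcget]; simp [hj]) (by omega)
    have hmod : (4 * (m - 1 - j) + 6) % 4 = 2 := by omega
    simp [nodeColor, hmod] at h3
  have hlb : ∀ j < m, 4 * (m - 1 - j) + 3 ≤ lam.getD j 0 := by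
    intro j hj
    have := hdom j
    rwa [hcget, if_pos hj] at this
  have hlm : lam.getD m 0 ≤ 1 := by
    by_contra hcon
    push_neg at hcon
    have h3 := hcol m 2 (by rw [hcget]; simp) (by omega)
    simp [nodeColor] at h3
  have hpos' : ∀ j < lam.length, 0 < lam.getD j 0 := by
    intro j hj
    rw [List.getD_eq_getElem _ _ hj]
    exact hpos _ (List.getElem_mem _)
  have hlen1 : m ≤ lam.length := by
    rcases Nat.eq_zero_or_pos m with h0 | h0
    · omega
    · by_contra hcon
      push_neg at hcon
      have h1 := hlb (m - 1) (by omega)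
      rw [List.getD_eq_default _ _ (by omega)] at h1
      omega
  have hlen2 : lam.length ≤ m + 1 := by
    by_contra hcon
    push_neg at hcon
    have hm1 : m < lam.length := by omega
    have hm2 : m + 1 < lam.length := by omega
    have h1 := hpos' (m + 1) hm2
    have h2 : lam.getD m 0 > lam.getD (m + 1) 0 := by
      rw [List.getD_eq_getElem _ _ hm1, List.getD_eq_getElem _ _ hm2]
      have := hsort.rel_get_of_lt
        (a := ⟨m, hm1⟩) (b := ⟨m + 1, hm2⟩) (Fin.mk_lt_mk.mpr (by omega))
      simpa using this
    omega
  have hL : lam.length = m ∨ lam.length = m + 1 := by omega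
  have hrval : ∀ j < m, lam.getD j 0
      = 4 * (m - 1 - j) + 3 + (lam.getD j 0 - (cBar (-(m : ℤ))).getD j 0) := by
    intro j hj
    have h1 := hlb j hj
    rw [hcget, if_pos hj]
    omega
  have hr2 : ∀ j < m, lam.getD j 0 - (cBar (-(m : ℤ))).getD j 0 ≤ 2 := by
    intro j hj
    have h1 := hub j hj
    rw [hcget, if_pos hj]
    omega
  have ht : (lam.length = m ∧ lam.getD m 0 = 0) ∨ (lam.length = m + 1 ∧ lam.getD m 0 = 1) := by
    rcases hL with hE | hE
    · exact Or.inl ⟨hE, List.getD_eq_default _ _ (by omega)⟩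
    · refine Or.inr ⟨hE, ?_⟩
      have := hpos' m (by omega)
      omega
  refine ⟨hL, ?_, ?_, ?_⟩
  · intro j hj
    have h1 := hr2 j hj
    simp only [Set.mem_insert_iff, Set.mem_singleton_iff]
    omega
  · simp only [Set.mem_insert_iff, Set.mem_singleton_iff]
    rcases ht with ⟨_, h0⟩ | ⟨_, h0⟩ <;> omega
  · -- existence of e
    set n1 : ℕ := ((Finset.range m).filter
      fun j => lam.getD j 0 - (cBar (-(m : ℤ))).getD j 0 = 1).card with hn1
    set n2 : ℕ := ((Finset.range m).filter
      fun j => lam.getD j 0 - (cBar (-(m : ℤ))).getD j 0 = 2).card with hn2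
    have hn1s : n1 = ∑ j ∈ Finset.range m,
        if lam.getD j 0 - (cBar (-(m : ℤ))).getD j 0 = 1 then 1 else 0 :=
      Finset.card_filter _ _
    have hn2s : n2 = ∑ j ∈ Finset.range m,
        if lam.getD j 0 - (cBar (-(m : ℤ))).getD j 0 = 2 then 1 else 0 :=
      Finset.card_filter _ _
    have key : (∑ j ∈ Finset.range m, (lam.getD j 0 - (cBar (-(m : ℤ))).getD j 0))
        + lam.getD m 0 = ℓ := by
      have hs := hsum
      rw [sum_eq_sum_range_aux lam, cBar_neg_sum_aux] at hs
      have hsplit : ∑ j ∈ Finset.range lam.length, lam.getD j 0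
          = (∑ j ∈ Finset.range m, lam.getD j 0) + lam.getD m 0 := by
        rcases ht with ⟨hE, h0⟩ | ⟨hE, h0⟩
        · rw [hE, h0, add_zero]
        · rw [hE, Finset.sum_range_succ]
      rw [hsplit] at hs
      have hdecomp : ∑ j ∈ Finset.range m, lam.getD j 0
          = (∑ j ∈ Finset.range m, (4 * (m - 1 - j) + 3))
            + ∑ j ∈ Finset.range m, (lam.getD j 0 - (cBar (-(m : ℤ))).getD j 0) := by
        rw [← Finset.sum_add_distrib]
        exact Finset.sum_congr rfl fun j hj => hrval j (Finset.mem_range.mp hj)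
      omega
    have hsum_r : ∑ j ∈ Finset.range m, (lam.getD j 0 - (cBar (-(m : ℤ))).getD j 0)
        = n1 + 2 * n2 := by
      rw [hn1s, hn2s, Finset.mul_sum, ← Finset.sum_add_distrib]
      refine Finset.sum_congr rfl fun j hj => ?_
      have h2 := hr2 j (Finset.mem_range.mp hj)
      split_ifs <;> omega
    have hcount : (lam.countP fun x => x % 2 == 0) = n1 := by
      rw [countP_eq_sum_range_aux, hn1s]
      have hsplit : ∑ j ∈ Finset.range lam.length, (if (lam.getD j 0 % 2 == 0) then 1 else 0)
          = ∑ j ∈ Finset.range m, (if (lam.getD j 0 % 2 == 0) then 1 else 0) := by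
        rcases ht with ⟨hE, h0⟩ | ⟨hE, h0⟩
        · rw [hE]
        · rw [hE, Finset.sum_range_succ, h0]
          norm_num
      rw [hsplit]
      refine Finset.sum_congr rfl fun j hj => ?_
      have hj' := Finset.mem_range.mp hj
      have hv := hrval j hj'
      have h2 := hr2 j hj'
      simp only [beq_iff_eq]
      split_ifs <;> omega
    have hprod : (∏ j ∈ Finset.range m,
        Nat.factorial (lam.getD j 0 - (cBar (-(m : ℤ))).getD j 0)) = 2 ^ n2 := by
      have hcongr : ∀ j ∈ Finset.range m,
          Nat.factorial (lam.getD j 0 - (cBar (-(m : ℤ))).getD j 0)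
            = 2 ^ (if lam.getD j 0 - (cBar (-(m : ℤ))).getD j 0 = 2 then 1 else 0) := by
        intro j hj
        have h2 := hr2 j (Finset.mem_range.mp hj)
        have hcase : lam.getD j 0 - (cBar (-(m : ℤ))).getD j 0 = 0
            ∨ lam.getD j 0 - (cBar (-(m : ℤ))).getD j 0 = 1
            ∨ lam.getD j 0 - (cBar (-(m : ℤ))).getD j 0 = 2 := by omega
        rcases hcase with hca | hca | hca <;> rw [hca] <;> norm_num [Nat.factorial]
      rw [Finset.prod_congr rfl hcongr, Finset.prod_pow_eq_pow_sum, ← hn2s]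
    refine ⟨n2 + lam.getD m 0 * epsN m, ?_, ?_⟩
    · rw [hcount]
      simp only [epsN]
      rcases ht with ⟨hE, h0⟩ | ⟨hE, h0⟩ <;> rw [hE, h0] <;> split_ifs <;> omega
    · rw [hprod, ← pow_add]
      ring_nf


end Rect
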